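/- Let 𝔟 be the Lie algebra of upper triangular traceless 3×3 real matrices, 𝔞 the diagonal traceless matrices, and 𝔫 the strictly upper triangular matrices. If 𝔩 is a 2-dimensional abelian Lie subalgebra of 𝔟 with 𝔩 ⊆ 𝔫, then there exists [x : y] ∈ ℙ¹(ℝ) such that 𝔩 = {t·x·E₁₂ + t·y·E₂₃ + s·E₁₃ : t, s ∈ ℝ}, where Eᵢⱼ denotes the elementary matrix. -/

import Mathlib

open Matrix

noncomputable section

/-- Elementary matrix `Eᵢⱼ` in `M₃(ℝ)`. -/
def E (i j : Fin 3) : Matrix (Fin 3) (Fin 3) ℝ := Matrix.single i j 1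

lemma decompE (X : Matrix (Fin 3) (Fin 3) ℝ) (h : ∀ i j : Fin 3, ¬ i < j → X i j = 0) :
    X = X 0 1 • E 0 1 + X 1 2 • E 1 2 + X 0 2 • E 0 2 := by
  have h00 := h 0 0 (by decide)
  have h10 := h 1 0 (by decide)
  have h11 := h 1 1 (by decide)
  have h20 := h 2 0 (by decide)
  have h21 := h 2 1 (by decide)
  have h22 := h 2 2 (by decide)
  ext i j
  fin_cases i <;> fin_cases j <;>
    simp [E, Matrix.single, h00, h10, h11, h20, h21, h22]

lemma comm02 (X Y : Matrix (Fin 3) (Fin 3) ℝ)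
    (hX : ∀ i j : Fin 3, ¬ i < j → X i j = 0)
    (hY : ∀ i j : Fin 3, ¬ i < j → Y i j = 0)
    (h : X * Y = Y * X) : X 0 1 * Y 1 2 = Y 0 1 * X 1 2 := by
  have e : (X * Y) 0 2 = (Y * X) 0 2 := by rw [h]
  simpa [Matrix.mul_apply, Fin.sum_univ_three, hX 0 0 (by decide), hY 0 0 (by decide),
    hX 2 2 (by decide), hY 2 2 (by decide)] using e

theorem stmt0 (L : Submodule ℝ (Matrix (Fin 3) (Fin 3) ℝ))
    (hdim : Module.finrank ℝ L = 2)
    (habelian : ∀ X ∈ L, ∀ Y ∈ L, X * Y = Y * X)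
    (hstrict : ∀ X ∈ L, ∀ i j : Fin 3, ¬ i < j → X i j = 0) :
    ∃ x y : ℝ, (x, y) ≠ (0, 0) ∧
      ∀ M : Matrix (Fin 3) (Fin 3) ℝ,
        M ∈ L ↔ ∃ t s : ℝ, M = t • (x • E 0 1 + y • E 1 2) + s • E 0 2 := by
  -- find Z in L with nonzero (Z01, Z12)
  have hZ : ∃ Z ∈ L, (Z 0 1, Z 1 2) ≠ (0, 0) := by
    by_contra hc
    push_neg at hc
    have hle : L ≤ Submodule.span ℝ {E 0 2} := by
      intro X hX
      have hpair := hc X hX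
      rw [Prod.mk.injEq] at hpair
      have hd := decompE X (hstrict X hX)
      rw [hpair.1, hpair.2] at hd
      rw [hd]
      simp only [zero_smul, zero_add]
      exact Submodule.smul_mem _ _ (Submodule.mem_span_singleton_self _)
    have h1 : Module.finrank ℝ L ≤ 1 := by
      refine (Submodule.finrank_mono hle).trans ?_
      refine (finrank_span_le_card _).trans ?_
      simp
    omega
  obtain ⟨Z, hZL, hZne⟩ := hZ
  set x := Z 0 1
  set y := Z 1 2
  refine ⟨x, y, hZne, ?_⟩
  set v1 : Matrix (Fin 3) (Fin 3) ℝ := x • E 0 1 + y • E 1 2 with hv1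
  set v2 : Matrix (Fin 3) (Fin 3) ℝ := E 0 2 with hv2
  have hLS : L ≤ Submodule.span ℝ {v1, v2} := by
    intro X hXL
    have hd := decompE X (hstrict X hXL)
    have hcomm := comm02 Z X (hstrict Z hZL) (hstrict X hXL) (habelian Z hZL X hXL)
    -- (X01, X12) = λ (x,y)
    have : ∃ l : ℝ, X 0 1 = l * x ∧ X 1 2 = l * y := by
      rcases eq_or_ne x 0 with hx | hx
      · have hy : y ≠ 0 := by
          intro hy; exact hZne (by simp [hx, hy])
        refine ⟨X 1 2 / y, ?_, by field_simp⟩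
        have : x * X 1 2 = X 0 1 * y := by linarith [hcomm]
        rw [hx] at this
        field_simp
        nlinarith [this]
      · refine ⟨X 0 1 / x, by field_simp, ?_⟩
        have : x * X 1 2 = X 0 1 * y := by linarith [hcomm]
        field_simp
        nlinarith [this]
    obtain ⟨l, h1, h2⟩ := this
    rw [Submodule.mem_span_pair]
    refine ⟨l, X 0 2, ?_⟩
    conv_rhs => rw [hd]
    rw [h1, h2, hv1, hv2]
    module
  have hfin : Module.finrank ℝ (Submodule.span ℝ ({v1, v2} : Set _)) ≤ 2 := by
    refine (finrank_span_le_card _).trans ?_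
    refine (Finset.card_le_card (by simp [Set.subset_def] : ({v1, v2} : Set _).toFinset ⊆ {v1, v2})).trans ?_
    exact (Finset.card_insert_le _ _).trans (by simp)
  have heq : L = Submodule.span ℝ {v1, v2} := by
    apply Submodule.eq_of_le_of_finrank_le hLS
    omega
  intro M
  rw [heq, Submodule.mem_span_pair]
  constructor
  · rintro ⟨a, b, rfl⟩; exact ⟨a, b, rfl⟩
  · rintro ⟨t, s, rfl⟩; exact ⟨t, s, rfl⟩
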